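/- The multiplicative invariant algebra of the root lattice $A_2$ under $S_3$ satisfies $\mathbb{Z}[A_2]^{S_3} \cong \mathbb{Z}[x,y,z]/(z^3 - xy)$. Equivalently, the monoid $M_2 = \{(l_1,l_2) \in \mathbb{Z}_+^2 \mid l_1 + 2 l_2 \equiv 0 \pmod 3\}$ has Hilbert basis $\{(1,1),(3,0),(0,3)\}$ and its monoid algebra over $\mathbb{Z}$ is $\mathbb{Z}[x,y,z]/(z^3 - xy)$ via $x \mapsto (3,0)$, $y \mapsto (0,3)$, $z \mapsto (1,1)$. -/

import Mathlib

open MvPolynomial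

/-- The monoid `M₂ = {(l₁,l₂) ∈ ℤ₊² | l₁ + 2l₂ ≡ 0 (mod 3)}`. -/
def M2 : AddSubmonoid (ℕ × ℕ) where
  carrier := {l | 3 ∣ (l.1 + 2 * l.2)}
  zero_mem' := by simp
  add_mem' := by
    intro a b ha hb
    have : (a + b).1 + 2 * (a + b).2 = (a.1 + 2 * a.2) + (b.1 + 2 * b.2) := by
      simp only [Prod.fst_add, Prod.snd_add]; ring
    show 3 ∣ (a + b).1 + 2 * (a + b).2
    rw [this]
    exact Nat.dvd_add ha hb

/-- The ideal `(z³ - xy)` of `ℤ[x,y,z]`. -/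
noncomputable def relIdeal : Ideal (MvPolynomial (Fin 3) ℤ) :=
  Ideal.span {(X 2 : MvPolynomial (Fin 3) ℤ) ^ 3 - X 0 * X 1}

section Aux

lemma mem_M2_iff (m : ℕ × ℕ) : m ∈ M2 ↔ 3 ∣ m.1 + 2 * m.2 := Iff.rfl

noncomputable abbrev QR := MvPolynomial (Fin 3) ℤ ⧸ relIdeal

noncomputable def xq : QR := Ideal.Quotient.mk relIdeal (X 0)
noncomputable def yq : QR := Ideal.Quotient.mk relIdeal (X 1)
noncomputable def zq : QR := Ideal.Quotient.mk relIdeal (X 2)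

lemma zq_cube : zq ^ 3 = xq * yq := by
  have h : Ideal.Quotient.mk relIdeal ((X 2 : MvPolynomial (Fin 3) ℤ) ^ 3 - X 0 * X 1) = 0 :=
    Ideal.Quotient.eq_zero_iff_mem.2 (Ideal.subset_span rfl)
  rw [map_sub, map_pow, map_mul, sub_eq_zero] at h
  exact h

noncomputable def hQ (a b : ℕ) : QR := zq ^ (min a b) * xq ^ ((a - b) / 3) * yq ^ ((b - a) / 3)

lemma hQ_eq (c p q : ℕ) : hQ (c + 3 * p) (c + 3 * q) = zq ^ c * xq ^ p * yq ^ q := by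
  unfold hQ
  rcases le_total p q with h | h
  · have h1 : min (c + 3 * p) (c + 3 * q) = c + 3 * p := by omega
    have h2 : (c + 3 * p - (c + 3 * q)) / 3 = 0 := by omega
    have h3 : (c + 3 * q - (c + 3 * p)) / 3 = q - p := by omega
    have h4 : yq ^ q = yq ^ p * yq ^ (q - p) := by rw [← pow_add]; congr 1; omega
    rw [h1, h2, h3, pow_zero, pow_add, pow_mul, zq_cube, mul_pow, h4]
    ring
  · have h1 : min (c + 3 * p) (c + 3 * q) = c + 3 * q := by omega
    have h2 : (c + 3 * p - (c + 3 * q)) / 3 = p - q := by omega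
    have h3 : (c + 3 * q - (c + 3 * p)) / 3 = 0 := by omega
    have h4 : xq ^ p = xq ^ q * xq ^ (p - q) := by rw [← pow_add]; congr 1; omega
    rw [h1, h2, h3, pow_zero, pow_add, pow_mul, zq_cube, mul_pow, h4]
    ring

lemma reprM2 (a b : ℕ) (h : 3 ∣ a + 2 * b) : ∃ c p q, a = c + 3 * p ∧ b = c + 3 * q :=
  ⟨min a b, (a - b) / 3, (b - a) / 3, by omega, by omega⟩

noncomputable def gQ : Multiplicative M2 →* QR where
  toFun m := hQ (Multiplicative.toAdd m).1.1 (Multiplicative.toAdd m).1.2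
  map_one' := by simp [hQ]
  map_mul' m n := by
    obtain ⟨c, p, q, h1, h2⟩ := reprM2 _ _ (Multiplicative.toAdd m).2
    obtain ⟨c', p', q', h1', h2'⟩ := reprM2 _ _ (Multiplicative.toAdd n).2
    show hQ ((Multiplicative.toAdd m).1.1 + (Multiplicative.toAdd n).1.1)
      ((Multiplicative.toAdd m).1.2 + (Multiplicative.toAdd n).1.2) =
      hQ (Multiplicative.toAdd m).1.1 (Multiplicative.toAdd m).1.2 *
      hQ (Multiplicative.toAdd n).1.1 (Multiplicative.toAdd n).1.2
    rw [h1, h2, h1', h2',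
      show c + 3 * p + (c' + 3 * p') = (c + c') + 3 * (p + p') by ring,
      show c + 3 * q + (c' + 3 * q') = (c + c') + 3 * (q + q') by ring,
      hQ_eq, hQ_eq, hQ_eq]
    ring

noncomputable def psi : AddMonoidAlgebra ℤ M2 →ₐ[ℤ] QR :=
  AddMonoidAlgebra.lift ℤ QR M2 gQ

def g0 : M2 := ⟨(3, 0), ⟨1, rfl⟩⟩
def g1 : M2 := ⟨(0, 3), ⟨2, rfl⟩⟩
def g2 : M2 := ⟨(1, 1), ⟨1, rfl⟩⟩

noncomputable def phi0 : MvPolynomial (Fin 3) ℤ →ₐ[ℤ] AddMonoidAlgebra ℤ M2 :=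
  aeval (fun i => AddMonoidAlgebra.single (if i = 0 then g0 else if i = 1 then g1 else g2) 1)

lemma phi0_rel : ∀ a ∈ relIdeal, phi0 a = 0 := by
  intro a ha
  rw [relIdeal, Ideal.mem_span_singleton] at ha
  obtain ⟨t, rfl⟩ := ha
  rw [map_mul]
  convert zero_mul (phi0 t)
  rw [map_sub, map_pow, map_mul, phi0, aeval_X, aeval_X, aeval_X]
  simp only [if_pos rfl, if_neg (by decide : (1 : Fin 3) ≠ 0),
    if_neg (by decide : (2 : Fin 3) ≠ 0), if_neg (by decide : (2 : Fin 3) ≠ 1), if_pos rfl]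
  rw [AddMonoidAlgebra.single_pow, AddMonoidAlgebra.single_mul_single, sub_eq_zero]
  have h30 : (3 • g2 : M2) = g0 + g1 := by
    apply Subtype.ext
    apply Prod.ext <;> simp [g0, g1, g2]
  rw [h30]
  norm_num

noncomputable def phi : QR →ₐ[ℤ] AddMonoidAlgebra ℤ M2 :=
  Ideal.Quotient.liftₐ relIdeal phi0 phi0_rel

lemma phi_xq : phi xq = AddMonoidAlgebra.single g0 1 := by
  show phi (Ideal.Quotient.mk relIdeal (X 0)) = _
  rw [phi, Ideal.Quotient.liftₐ_apply]
  show phi0 (X 0) = _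
  rw [phi0, aeval_X]; simp

lemma phi_yq : phi yq = AddMonoidAlgebra.single g1 1 := by
  show phi (Ideal.Quotient.mk relIdeal (X 1)) = _
  rw [phi, Ideal.Quotient.liftₐ_apply]
  show phi0 (X 1) = _
  rw [phi0, aeval_X]
  simp [if_neg (by decide : (1 : Fin 3) ≠ 0)]

lemma phi_zq : phi zq = AddMonoidAlgebra.single g2 1 := by
  show phi (Ideal.Quotient.mk relIdeal (X 2)) = _
  rw [phi, Ideal.Quotient.liftₐ_apply]
  show phi0 (X 2) = _
  rw [phi0, aeval_X]
  simp [if_neg (by decide : (2 : Fin 3) ≠ 0), if_neg (by decide : (2 : Fin 3) ≠ 1)]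

lemma psi_single (m : M2) : psi (AddMonoidAlgebra.single m 1) = hQ m.1.1 m.1.2 := by
  rw [psi, AddMonoidAlgebra.lift_single]
  simp [gQ]

lemma phi_comp_psi : phi.comp psi = AlgHom.id ℤ (AddMonoidAlgebra ℤ M2) := by
  apply AddMonoidAlgebra.algHom_ext
  intro m
  obtain ⟨c, p, q, h1, h2⟩ := reprM2 m.1.1 m.1.2 m.2
  show phi (psi (AddMonoidAlgebra.single m 1)) = AddMonoidAlgebra.single m 1
  rw [psi_single]
  have : hQ m.1.1 m.1.2 = zq ^ c * xq ^ p * yq ^ q := by rw [h1, h2]; exact hQ_eq c p q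
  rw [this, map_mul, map_mul, map_pow, map_pow, map_pow, phi_xq, phi_yq, phi_zq,
    AddMonoidAlgebra.single_pow, AddMonoidAlgebra.single_pow, AddMonoidAlgebra.single_pow,
    AddMonoidAlgebra.single_mul_single, AddMonoidAlgebra.single_mul_single]
  congr 1
  · apply Subtype.ext
    show (c • g2.1 + p • g0.1) + q • g1.1 = m.1
    apply Prod.ext <;> simp [g0, g1, g2] <;> omega
  · norm_num
  exact Subsingleton.elim _ _

lemma psi_comp_phi : psi.comp phi = AlgHom.id ℤ QR := by
  apply Ideal.Quotient.algHom_ext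
  apply MvPolynomial.algHom_ext
  intro i
  show psi (phi (Ideal.Quotient.mk relIdeal (X i))) = Ideal.Quotient.mk relIdeal (X i)
  fin_cases i
  · show psi (phi xq) = xq
    rw [phi_xq, psi_single]
    show hQ 3 0 = xq
    simp [hQ]
  · show psi (phi yq) = yq
    rw [phi_yq, psi_single]
    show hQ 0 3 = yq
    simp [hQ]
  · show psi (phi zq) = zq
    rw [phi_zq, psi_single]
    show hQ 1 1 = zq
    simp [hQ]

noncomputable def theEquiv : QR ≃ₐ[ℤ] AddMonoidAlgebra ℤ M2 :=
  AlgEquiv.ofAlgHom phi psi phi_comp_psi psi_comp_phi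

end Aux

theorem A2_S3_invariant_algebra :
    ({m : ℕ × ℕ | m ∈ M2 ∧ m ≠ 0 ∧
        ∀ a b : ℕ × ℕ, a ∈ M2 → b ∈ M2 → a + b = m → a = 0 ∨ b = 0} =
      {(1, 1), (3, 0), (0, 3)}) ∧
    ∃ e : (MvPolynomial (Fin 3) ℤ ⧸ relIdeal) ≃ₐ[ℤ] AddMonoidAlgebra ℤ M2,
      e (Ideal.Quotient.mk relIdeal (X 0)) =
        AddMonoidAlgebra.single ⟨(3, 0), by show 3 ∣ _; omega⟩ 1 ∧
      e (Ideal.Quotient.mk relIdeal (X 1)) =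
        AddMonoidAlgebra.single ⟨(0, 3), by show 3 ∣ _; omega⟩ 1 ∧
      e (Ideal.Quotient.mk relIdeal (X 2)) =
        AddMonoidAlgebra.single ⟨(1, 1), by show 3 ∣ _; omega⟩ 1 := by
  constructor
  · ext ⟨a, b⟩
    simp only [Set.mem_setOf_eq, Set.mem_insert_iff, Set.mem_singleton_iff, Prod.mk.injEq]
    constructor
    · rintro ⟨hm, hne, hind⟩
      have hd : 3 ∣ a + 2 * b := hm
      have hne' : ¬(a = 0 ∧ b = 0) := by
        intro ⟨h1, h2⟩; exact hne (by simp [h1, h2, Prod.ext_iff])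
      by_cases ha : a = 0
      · subst ha
        have hb3 : 3 ≤ b ∧ 3 ∣ b := by omega
        have := hind (0, 3) (0, b - 3) (by show 3 ∣ _; omega) (by show 3 ∣ _; omega)
          (by apply Prod.ext <;> simp <;> omega)
        rcases this with h | h
        · simp [Prod.ext_iff] at h
        · right; right
          have : b - 3 = 0 := by
            have := congrArg Prod.snd h; simpa using this
          omega
      · by_cases hb : b = 0
        · subst hb
          have ha3 : 3 ≤ a ∧ 3 ∣ a := by omega
          have := hind (3, 0) (a - 3, 0) (by show 3 ∣ _; omega) (by show 3 ∣ _; omega)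
            (by apply Prod.ext <;> simp <;> omega)
          rcases this with h | h
          · simp [Prod.ext_iff] at h
          · right; left
            have : a - 3 = 0 := by
              have := congrArg Prod.fst h; simpa using this
            omega
        · have := hind (1, 1) (a - 1, b - 1) (by show 3 ∣ _; omega) (by show 3 ∣ _; omega)
            (by apply Prod.ext <;> simp <;> omega)
          rcases this with h | h
          · simp [Prod.ext_iff] at h
          · left
            have h1 := congrArg Prod.fst h
            have h2 := congrArg Prod.snd h
            simp at h1 h2
            omega
    · rintro (⟨rfl, rfl⟩ | ⟨rfl, rfl⟩ | ⟨rfl, rfl⟩) <;>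
      refine ⟨by show 3 ∣ _; omega, by simp [Prod.ext_iff], ?_⟩ <;>
      · rintro ⟨a1, a2⟩ ⟨b1, b2⟩ h1 h2 hsum
        have d1 : 3 ∣ a1 + 2 * a2 := h1
        have d2 : 3 ∣ b1 + 2 * b2 := h2
        have e1 := congrArg Prod.fst hsum
        have e2 := congrArg Prod.snd hsum
        simp at e1 e2
        simp only [Prod.mk_eq_zero]
        obtain ⟨k, hk⟩ := d1
        obtain ⟨l, hl⟩ := d2
        omega
  · refine ⟨theEquiv, ?_, ?_, ?_⟩
    · show phi (Ideal.Quotient.mk relIdeal (X 0)) = _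
      exact phi_xq
    · show phi (Ideal.Quotient.mk relIdeal (X 1)) = _
      exact phi_yq
    · show phi (Ideal.Quotient.mk relIdeal (X 2)) = _
      exact phi_zq
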